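/- Let X be a type, S ⊆ X, and let B : ℝ × ℝ → Set X satisfy the interpolation property: for all x₀, x₁ > 0, s₀, s₁, θ ∈ (0,1), B(x₀,s₀) ∩ B(x₁,s₁) ⊆ B((1-θ)x₀+θx₁, (1-θ)s₀+θs₁). Fix d ≥ 1, reals 0 < x_z < x_p, z ∈ ℝ and α > 0. Assume S ⊆ B(x_z, z) and S ⊆ B(α/d + x_p, α). Then S ⊆ B(x_p, s̃) where s̃ = α·(z + d(x_p - x_z))/(α + d(x_p - x_z)). -/

import Mathlib

theorem stmt5 {X : Type*} (S : Set X) (B : ℝ → ℝ → Set X)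
    (hinterp : ∀ x₀ s₀ x₁ s₁ θ : ℝ, 0 < x₀ → 0 < x₁ → 0 < θ → θ < 1 →
      B x₀ s₀ ∩ B x₁ s₁ ⊆ B ((1 - θ) * x₀ + θ * x₁) ((1 - θ) * s₀ + θ * s₁))
    (d : ℕ) (hd : 1 ≤ d) (x_z x_p z α : ℝ)
    (hxz : 0 < x_z) (hxzp : x_z < x_p) (hα : 0 < α)
    (h1 : S ⊆ B x_z z) (h2 : S ⊆ B (α / d + x_p) α) :
    S ⊆ B x_p (α * (z + d * (x_p - x_z)) / (α + d * (x_p - x_z))) := by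
  have hdpos : (0:ℝ) < d := by exact_mod_cast hd
  set D : ℝ := d * (x_p - x_z) with hD
  have hDpos : 0 < D := mul_pos hdpos (by linarith)
  have hden : 0 < α + D := by linarith
  set θ : ℝ := D / (α + D) with hθ
  have hθpos : 0 < θ := div_pos hDpos hden
  have hθlt : θ < 1 := (div_lt_one hden).2 (by linarith)
  intro x hx
  have key := hinterp x_z z (α / d + x_p) α θ hxz
    (by have hxp : 0 < x_p := hxz.trans hxzp; positivity) hθpos hθlt ⟨h1 hx, h2 hx⟩
  have e1 : (1 - θ) * x_z + θ * (α / d + x_p) = x_p := by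
    rw [hθ]; field_simp; rw [hD]; ring
  have e2 : (1 - θ) * z + θ * α = α * (z + D) / (α + D) := by
    rw [hθ]; field_simp; ring
  rwa [e1, e2] at key
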